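/- Let k₁₋, k₁₊, k₂₋, k₂₊, ν be positive real numbers and let (p_{i,n})_{i∈{0,1,2}, n∈ℕ} be nonnegative reals with Σ_{i,n} (n+1)·p_{i,n} < ∞, satisfying for all n ∈ ℕ the steady-state balance equations (with p_{i,−1} := 0): 0 = −k₁₊p_{0,n} − n·p_{0,n} + (n+1)p_{0,n+1} + k₁₋p_{1,n}; 0 = −k₁₋p_{1,n} − n·p_{1,n} + (n+1)p_{1,n+1} + k₁₊p_{0,n} − k₂₊p_{1,n} + k₂₋p_{2,n}; 0 = −k₂₋p_{2,n} + k₂₊p_{1,n} − n·p_{2,n} + (n+1)p_{2,n+1} − νp_{2,n} + νp_{2,n−1}. Then the generating functions G_i(z) = Σ_{n=0}^∞ p_{i,n} zⁿ are well-defined and differentiable on the open interval (−1, 1), and on that interval they satisfy: k₁₋G₁(z) − k₁₊G₀(z) + (1−z)G₀′(z) = 0; k₁₊G₀(z) − k₁₋G₁(z) − k₂₊G₁(z) + k₂₋G₂(z) + (1−z)G₁′(z) = 0; and k₂₊G₁(z) − k₂₋G₂(z) + (1−z)G₂′(z) − ν(1−z)G₂(z) = 0. -/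
import Mathlib

section Aux

variable {q : ℕ → ℝ} {z : ℝ}

private lemma aux_bound {a c t : ℝ} (ha : 0 ≤ a) (hc : 0 ≤ c) (ht0 : 0 ≤ t) (ht1 : t ≤ 1) :
    c * a * t ≤ (c + 1) * a := by
  have h1 : c * a * t ≤ c * a * 1 := mul_le_mul_of_nonneg_left ht1 (mul_nonneg hc ha)
  have h2 : (c + 1) * a = c * a + a := by ring
  linarith

private lemma aux_summable_base (hq0 : ∀ n, 0 ≤ q n)
    (hq : Summable fun n : ℕ => ((n : ℝ) + 1) * q n) (hz : |z| < 1) :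
    Summable fun n : ℕ => q n * z ^ n := by
  refine Summable.of_norm (hq.of_nonneg_of_le (fun n => norm_nonneg _) fun n => ?_)
  rw [norm_mul, norm_pow, Real.norm_eq_abs, Real.norm_eq_abs, abs_of_nonneg (hq0 n)]
  have h1 : |z| ^ n ≤ 1 := pow_le_one₀ (abs_nonneg z) hz.le
  have h2 : (0 : ℝ) ≤ |z| ^ n := pow_nonneg (abs_nonneg z) n
  nlinarith [hq0 n, Nat.cast_nonneg (α := ℝ) n, mul_nonneg (hq0 n) h2,
    mul_le_mul_of_nonneg_left h1 (hq0 n)]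

private lemma aux_summable_deriv (hq0 : ∀ n, 0 ≤ q n)
    (hq : Summable fun n : ℕ => ((n : ℝ) + 1) * q n) (hz : |z| < 1) :
    Summable fun n : ℕ => q n * ((n : ℝ) * z ^ (n - 1)) := by
  refine Summable.of_norm (hq.of_nonneg_of_le (fun n => norm_nonneg _) fun n => ?_)
  rw [norm_mul, norm_mul, norm_pow, Real.norm_eq_abs, Real.norm_eq_abs, Real.norm_eq_abs,
    abs_of_nonneg (hq0 n), abs_of_nonneg (Nat.cast_nonneg (α := ℝ) n)]
  have h1 : |z| ^ (n - 1) ≤ 1 := pow_le_one₀ (abs_nonneg z) hz.le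
  have h2 : (0 : ℝ) ≤ |z| ^ (n - 1) := pow_nonneg (abs_nonneg z) _
  calc q n * ((n : ℝ) * |z| ^ (n - 1)) = (n : ℝ) * q n * |z| ^ (n - 1) := by ring
    _ ≤ ((n : ℝ) + 1) * q n :=
      aux_bound (hq0 n) (Nat.cast_nonneg (α := ℝ) n) h2 h1

private lemma aux_summable_nmul (hq0 : ∀ n, 0 ≤ q n)
    (hq : Summable fun n : ℕ => ((n : ℝ) + 1) * q n) (hz : |z| < 1) :
    Summable fun n : ℕ => (n : ℝ) * q n * z ^ n := by
  refine Summable.of_norm (hq.of_nonneg_of_le (fun n => norm_nonneg _) fun n => ?_)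
  rw [norm_mul, norm_mul, norm_pow, Real.norm_eq_abs, Real.norm_eq_abs, Real.norm_eq_abs,
    abs_of_nonneg (hq0 n), abs_of_nonneg (Nat.cast_nonneg (α := ℝ) n)]
  have h1 : |z| ^ n ≤ 1 := pow_le_one₀ (abs_nonneg z) hz.le
  have h2 : (0 : ℝ) ≤ |z| ^ n := pow_nonneg (abs_nonneg z) n
  exact aux_bound (hq0 n) (Nat.cast_nonneg (α := ℝ) n) h2 h1

private lemma aux_summable_shift (hq0 : ∀ n, 0 ≤ q n)
    (hq : Summable fun n : ℕ => ((n : ℝ) + 1) * q n) (hz : |z| < 1) :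
    Summable fun n : ℕ => ((n : ℝ) + 1) * q (n + 1) * z ^ n := by
  have hsh : Summable fun n : ℕ => ((n : ℝ) + 2) * q (n + 1) := by
    have := (summable_nat_add_iff (f := fun n : ℕ => ((n : ℝ) + 1) * q n) 1).2 hq
    refine this.congr fun n => ?_
    push_cast
    ring
  refine Summable.of_norm (hsh.of_nonneg_of_le (fun n => norm_nonneg _) fun n => ?_)
  rw [norm_mul, norm_mul, norm_pow, Real.norm_eq_abs, Real.norm_eq_abs, Real.norm_eq_abs,
    abs_of_nonneg (by positivity : (0:ℝ) ≤ (n : ℝ) + 1), abs_of_nonneg (hq0 (n + 1))]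
  have h1 : |z| ^ n ≤ 1 := pow_le_one₀ (abs_nonneg z) hz.le
  have h2 : (0 : ℝ) ≤ |z| ^ n := pow_nonneg (abs_nonneg z) n
  have := aux_bound (a := q (n + 1)) (c := (n : ℝ) + 1) (hq0 (n + 1))
    (by positivity) h2 h1
  linarith

private lemma aux_shift_eq (hq0 : ∀ n, 0 ≤ q n)
    (hq : Summable fun n : ℕ => ((n : ℝ) + 1) * q n) (hz : |z| < 1) :
    ∑' n : ℕ, q n * ((n : ℝ) * z ^ (n - 1)) = ∑' n : ℕ, ((n : ℝ) + 1) * q (n + 1) * z ^ n := by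
  rw [Summable.tsum_eq_zero_add (aux_summable_deriv hq0 hq hz)]
  simp only [Nat.cast_zero, zero_mul, mul_zero, zero_add, Nat.add_sub_cancel]
  refine tsum_congr fun n => ?_
  push_cast
  ring

private lemma aux_nmul_eq (hq0 : ∀ n, 0 ≤ q n)
    (hq : Summable fun n : ℕ => ((n : ℝ) + 1) * q n) (hz : |z| < 1) :
    ∑' n : ℕ, (n : ℝ) * q n * z ^ n = z * ∑' n : ℕ, ((n : ℝ) + 1) * q (n + 1) * z ^ n := by
  rw [← aux_shift_eq hq0 hq hz, ← tsum_mul_left]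
  refine tsum_congr fun n => ?_
  cases n with
  | zero => simp
  | succ m =>
    rw [pow_succ]
    push_cast
    ring

private lemma aux_hasDerivAt (hq0 : ∀ n, 0 ≤ q n)
    (hq : Summable fun n : ℕ => ((n : ℝ) + 1) * q n) (hz : |z| < 1) :
    HasDerivAt (fun y : ℝ => ∑' n : ℕ, q n * y ^ n)
      (∑' n : ℕ, ((n : ℝ) + 1) * q (n + 1) * z ^ n) z := by
  rw [← aux_shift_eq hq0 hq hz]
  refine hasDerivAt_tsum_of_isPreconnected (u := fun n : ℕ => ((n : ℝ) + 1) * q n)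
    (g' := fun n y => q n * ((n : ℝ) * y ^ (n - 1))) hq isOpen_Ioo
    (convex_Ioo (-1 : ℝ) 1).isPreconnected (fun n y _ => ?_) (fun n y hy => ?_)
    (by constructor <;> norm_num : (0 : ℝ) ∈ Set.Ioo (-1 : ℝ) 1) ?_
    (abs_lt.mp hz : z ∈ Set.Ioo (-1 : ℝ) 1)
  · exact (hasDerivAt_pow n y).const_mul (q n)
  · have hy' : |y| < 1 := abs_lt.mpr ⟨hy.1, hy.2⟩
    rw [norm_mul, norm_mul, norm_pow, Real.norm_eq_abs, Real.norm_eq_abs, Real.norm_eq_abs,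
      abs_of_nonneg (hq0 n), abs_of_nonneg (Nat.cast_nonneg (α := ℝ) n)]
    have h1 : |y| ^ (n - 1) ≤ 1 := pow_le_one₀ (abs_nonneg y) hy'.le
    have h2 : (0 : ℝ) ≤ |y| ^ (n - 1) := pow_nonneg (abs_nonneg y) _
    show q n * ((n : ℝ) * |y| ^ (n - 1)) ≤ ((n : ℝ) + 1) * q n
    calc q n * ((n : ℝ) * |y| ^ (n - 1)) = (n : ℝ) * q n * |y| ^ (n - 1) := by ring
      _ ≤ ((n : ℝ) + 1) * q n :=
        aux_bound (hq0 n) (Nat.cast_nonneg (α := ℝ) n) h2 h1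
  · refine summable_of_ne_finset_zero (s := {0}) fun n hn => ?_
    simp only [Finset.mem_singleton] at hn
    rw [zero_pow hn, mul_zero]

private lemma aux_down_summable (hq0 : ∀ n, 0 ≤ q n)
    (hq : Summable fun n : ℕ => ((n : ℝ) + 1) * q n) (hz : |z| < 1) :
    Summable fun n : ℕ => (if n = 0 then (0 : ℝ) else q (n - 1)) * z ^ n := by
  have hqd : Summable fun n : ℕ => q n := by
    refine hq.of_nonneg_of_le hq0 fun n => ?_
    nlinarith [hq0 n, Nat.cast_nonneg (α := ℝ) n]
  have hu : Summable fun n : ℕ => (if n = 0 then (0 : ℝ) else q (n - 1)) := by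
    refine (summable_nat_add_iff
      (f := fun n : ℕ => if n = 0 then (0 : ℝ) else q (n - 1)) 1).1 ?_
    simpa using hqd
  refine Summable.of_norm (hu.of_nonneg_of_le (fun n => norm_nonneg _) fun n => ?_)
  rw [norm_mul, norm_pow, Real.norm_eq_abs, Real.norm_eq_abs]
  have h1 : |z| ^ n ≤ 1 := pow_le_one₀ (abs_nonneg z) hz.le
  have h2 : (0 : ℝ) ≤ |z| ^ n := pow_nonneg (abs_nonneg z) n
  have h3 : (0 : ℝ) ≤ (if n = 0 then (0 : ℝ) else q (n - 1)) := by
    split <;> simp [hq0]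
  rw [abs_of_nonneg h3]
  nlinarith

private lemma aux_down_eq (hq0 : ∀ n, 0 ≤ q n)
    (hq : Summable fun n : ℕ => ((n : ℝ) + 1) * q n) (hz : |z| < 1) :
    ∑' n : ℕ, (if n = 0 then (0 : ℝ) else q (n - 1)) * z ^ n
      = z * ∑' n : ℕ, q n * z ^ n := by
  rw [Summable.tsum_eq_zero_add (aux_down_summable hq0 hq hz)]
  simp only [↓reduceIte, zero_mul, zero_add]
  rw [← tsum_mul_left]
  apply tsum_congr
  intro n
  simp only [Nat.succ_ne_zero, if_false, Nat.add_sub_cancel]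
  rw [pow_succ]
  ring

end Aux

/-- If nonnegative steady-state probabilities p_{i,n} with
Σ_{i,n} (n+1)p_{i,n} < ∞ satisfy the balance equations of the three-state gene model,
then the generating functions G_i(z) = Σₙ p_{i,n} zⁿ are well-defined and differentiable
on (−1,1) and satisfy the steady-state generating-function system there. -/
theorem balance_equations_to_generating_functions
    (k₁m k₁p k₂m k₂p ν : ℝ) (hk₁m : 0 < k₁m) (hk₁p : 0 < k₁p)
    (hk₂m : 0 < k₂m) (hk₂p : 0 < k₂p) (hν : 0 < ν)
    (p : Fin 3 → ℕ → ℝ)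
    (hpos : ∀ i n, 0 ≤ p i n)
    (hsum : Summable fun q : Fin 3 × ℕ => ((q.2 : ℝ) + 1) * p q.1 q.2)
    (hbal₀ : ∀ n : ℕ, 0 = -k₁p * p 0 n - (n : ℝ) * p 0 n + ((n : ℝ) + 1) * p 0 (n + 1)
      + k₁m * p 1 n)
    (hbal₁ : ∀ n : ℕ, 0 = -k₁m * p 1 n - (n : ℝ) * p 1 n + ((n : ℝ) + 1) * p 1 (n + 1)
      + k₁p * p 0 n - k₂p * p 1 n + k₂m * p 2 n)
    (hbal₂ : ∀ n : ℕ, 0 = -k₂m * p 2 n + k₂p * p 1 n - (n : ℝ) * p 2 n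
      + ((n : ℝ) + 1) * p 2 (n + 1) - ν * p 2 n
      + ν * (if n = 0 then 0 else p 2 (n - 1)))
    (G : Fin 3 → ℝ → ℝ)
    (hG : ∀ i, ∀ z : ℝ, G i z = ∑' n : ℕ, p i n * z ^ n) :
    ∀ z ∈ Set.Ioo (-1 : ℝ) 1,
      (∀ i, Summable fun n : ℕ => p i n * z ^ n) ∧
      (∀ i, DifferentiableAt ℝ (G i) z) ∧
      k₁m * G 1 z - k₁p * G 0 z + (1 - z) * deriv (G 0) z = 0 ∧
      k₁p * G 0 z - k₁m * G 1 z - k₂p * G 1 z + k₂m * G 2 z + (1 - z) * deriv (G 1) z = 0 ∧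
      k₂p * G 1 z - k₂m * G 2 z + (1 - z) * deriv (G 2) z - ν * (1 - z) * G 2 z = 0 := by
  intro z hz
  have hz' : |z| < 1 := abs_lt.mpr ⟨hz.1, hz.2⟩
  have hqi : ∀ i, Summable fun n : ℕ => ((n : ℝ) + 1) * p i n := fun i => hsum.prod_factor i
  have hS : ∀ i, Summable fun n : ℕ => p i n * z ^ n :=
    fun i => aux_summable_base (hpos i) (hqi i) hz'
  have hGeq : ∀ i, G i = fun y : ℝ => ∑' n : ℕ, p i n * y ^ n :=
    fun i => funext (hG i)
  have hD : ∀ i, HasDerivAt (G i)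
      (∑' n : ℕ, ((n : ℝ) + 1) * p i (n + 1) * z ^ n) z := by
    intro i
    rw [hGeq i]
    exact aux_hasDerivAt (hpos i) (hqi i) hz'
  have hderiv : ∀ i, deriv (G i) z = ∑' n : ℕ, ((n : ℝ) + 1) * p i (n + 1) * z ^ n :=
    fun i => (hD i).deriv
  refine ⟨hS, fun i => (hD i).differentiableAt, ?_, ?_, ?_⟩
  all_goals
    simp only [hG, hderiv]
  -- abbreviations
  · -- equation 0
    have key : (0 : ℝ) = ∑' n : ℕ,
        (k₁m * (p 1 n * z ^ n) + (-k₁p) * (p 0 n * z ^ n)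
          + (((n : ℝ) + 1) * p 0 (n + 1) * z ^ n + -((n : ℝ) * p 0 n * z ^ n))) := by
      refine tsum_zero.symm.trans (tsum_congr fun n => ?_)
      linear_combination z ^ n * hbal₀ n
    have hA := (hS 1).mul_left k₁m
    have hB := (hS 0).mul_left (-k₁p)
    have hC := aux_summable_shift (hpos 0) (hqi 0) hz'
    have hDn := (aux_summable_nmul (hpos 0) (hqi 0) hz').neg
    rw [Summable.tsum_add (hA.add hB) (hC.add hDn), Summable.tsum_add hA hB, Summable.tsum_add hC hDn,
      tsum_mul_left, tsum_mul_left, tsum_neg,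
      aux_nmul_eq (hpos 0) (hqi 0) hz'] at key
    linear_combination -key
  · -- equation 1
    have key : (0 : ℝ) = ∑' n : ℕ,
        ((k₁p * (p 0 n * z ^ n) + (-k₁m) * (p 1 n * z ^ n)
          + ((-k₂p) * (p 1 n * z ^ n) + k₂m * (p 2 n * z ^ n)))
          + (((n : ℝ) + 1) * p 1 (n + 1) * z ^ n + -((n : ℝ) * p 1 n * z ^ n))) := by
      refine tsum_zero.symm.trans (tsum_congr fun n => ?_)
      linear_combination z ^ n * hbal₁ n
    have hA := (hS 0).mul_left k₁p
    have hB := (hS 1).mul_left (-k₁m)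
    have hB' := (hS 1).mul_left (-k₂p)
    have hB'' := (hS 2).mul_left k₂m
    have hC := aux_summable_shift (hpos 1) (hqi 1) hz'
    have hDn := (aux_summable_nmul (hpos 1) (hqi 1) hz').neg
    rw [Summable.tsum_add ((hA.add hB).add (hB'.add hB'')) (hC.add hDn),
      Summable.tsum_add (hA.add hB) (hB'.add hB''), Summable.tsum_add hA hB, Summable.tsum_add hB' hB'',
      Summable.tsum_add hC hDn, tsum_mul_left, tsum_mul_left, tsum_mul_left, tsum_mul_left,
      tsum_neg, aux_nmul_eq (hpos 1) (hqi 1) hz'] at key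
    linear_combination -key
  · -- equation 2
    have key : (0 : ℝ) = ∑' n : ℕ,
        ((k₂p * (p 1 n * z ^ n) + (-k₂m) * (p 2 n * z ^ n)
          + ((-ν) * (p 2 n * z ^ n)
            + ν * ((if n = 0 then (0 : ℝ) else p 2 (n - 1)) * z ^ n)))
          + (((n : ℝ) + 1) * p 2 (n + 1) * z ^ n + -((n : ℝ) * p 2 n * z ^ n))) := by
      refine tsum_zero.symm.trans (tsum_congr fun n => ?_)
      linear_combination z ^ n * hbal₂ n
    have hA := (hS 1).mul_left k₂p
    have hB := (hS 2).mul_left (-k₂m)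
    have hB' := (hS 2).mul_left (-ν)
    have hB'' := (aux_down_summable (hpos 2) (hqi 2) hz').mul_left ν
    have hC := aux_summable_shift (hpos 2) (hqi 2) hz'
    have hDn := (aux_summable_nmul (hpos 2) (hqi 2) hz').neg
    rw [Summable.tsum_add ((hA.add hB).add (hB'.add hB'')) (hC.add hDn),
      Summable.tsum_add (hA.add hB) (hB'.add hB''), Summable.tsum_add hA hB, Summable.tsum_add hB' hB'',
      Summable.tsum_add hC hDn, tsum_mul_left, tsum_mul_left, tsum_mul_left, tsum_mul_left,
      tsum_neg, aux_nmul_eq (hpos 2) (hqi 2) hz',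
      aux_down_eq (hpos 2) (hqi 2) hz'] at key
    linear_combination -key
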